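/- (Combinatorial lemma.) There is a universal constant C > 0 with the following property. Let a : ℤ → ℂ be a sequence with ∑_{k∈ℤ} |a_k| = S < ∞ and let N ≥ 1 be a natural number. Then ∑_{n∈ℤ} ∑_{(n₁,…,n_N)∈ℤ^N with n₁²+⋯+n_N² ≠ n²} |a_{n₁} a_{n₂} ⋯ a_{n_N}| / |n₁² + ⋯ + n_N² − n²| ≤ C · S^N. In particular the left-hand side is finite. -/

import Mathlib

open scoped ENNReal


lemma real_partial : ∀ n : ℕ, (∑ i ∈ Finset.range n, (1:ℝ)/((i:ℝ)+1)^2) ≤ 2 := by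
  have key : ∀ n : ℕ, 1 ≤ n → (∑ i ∈ Finset.range n, (1:ℝ)/((i:ℝ)+1)^2) ≤ 2 - 1/(n:ℝ) := by
    intro n hn
    induction n with
    | zero => omega
    | succ n ih =>
      rcases Nat.eq_or_lt_of_le hn with h | h
      · simp [← h]; norm_num
      · have hn1 : 1 ≤ n := by omega
        have hnr : (1:ℝ) ≤ n := by exact_mod_cast hn1
        rw [Finset.sum_range_succ]
        have step : (1:ℝ)/((n:ℝ)+1)^2 ≤ 1/(n:ℝ) - 1/((n:ℝ)+1) := by
          rw [div_sub_div _ _ (by positivity) (by positivity)]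
          rw [div_le_div_iff₀ (by positivity) (by positivity)]
          ring_nf
          nlinarith [sq_nonneg ((n:ℝ))]
        have := ih hn1
        push_cast
        linarith
  intro n
  rcases Nat.eq_zero_or_pos n with h | h
  · simp [h]
  · have := key n h
    have : (0:ℝ) ≤ 1/(n:ℝ) := by positivity
    linarith [key n h]

lemma basel_ennreal : (∑' j : ℕ, ((((j+1)^2 : ℕ)) : ℝ≥0∞)⁻¹) ≤ 2 := by
  rw [ENNReal.tsum_eq_iSup_sum]
  apply iSup_le
  intro s
  obtain ⟨n, hn⟩ : ∃ n, s ⊆ Finset.range n := ⟨s.sup id + 1, fun x hx =>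
    Finset.mem_range.2 (Nat.lt_succ_of_le (Finset.le_sup (f := id) hx))⟩
  calc ∑ j ∈ s, ((((j+1)^2 : ℕ)) : ℝ≥0∞)⁻¹ ≤ ∑ j ∈ Finset.range n, ((((j+1)^2 : ℕ)) : ℝ≥0∞)⁻¹ :=
        Finset.sum_le_sum_of_subset hn
    _ ≤ 2 := by
        have heq : ∀ j : ℕ, ((((j+1)^2 : ℕ)) : ℝ≥0∞)⁻¹ = ENNReal.ofReal ((1:ℝ)/((j:ℝ)+1)^2) := by
          intro j
          rw [one_div, ENNReal.ofReal_inv_of_pos (by positivity)]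
          congr 1
          rw [← ENNReal.ofReal_natCast]
          congr 1
          push_cast; ring
        simp_rw [heq]
        rw [← ENNReal.ofReal_sum_of_nonneg (fun i _ => by positivity)]
        calc ENNReal.ofReal (∑ i ∈ Finset.range n, (1:ℝ)/((i:ℝ)+1)^2) ≤ ENNReal.ofReal 2 :=
              ENNReal.ofReal_le_ofReal (real_partial n)
          _ = 2 := by norm_num

noncomputable def cfun (j : ℕ) : ℝ≥0∞ := (((max (j-1) 1)^2 : ℕ) : ℝ≥0∞)⁻¹

lemma cfun_sum : (∑' j : ℕ, cfun j) ≤ 4 := by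
  rw [tsum_eq_zero_add' ENNReal.summable, tsum_eq_zero_add' ENNReal.summable]
  have h0 : cfun 0 = 1 := by simp [cfun]
  have h1 : cfun 1 = 1 := by simp [cfun]
  have h2 : ∀ j : ℕ, cfun (j+1+1) = ((((j+1)^2 : ℕ)) : ℝ≥0∞)⁻¹ := by
    intro j
    have : max (j+1+1-1) 1 = j+1 := by omega
    simp [cfun, this]
  simp_rw [h0, h1, h2]
  have := basel_ennreal
  calc (1:ℝ≥0∞) + (1 + ∑' j : ℕ, ((((j+1)^2 : ℕ)) : ℝ≥0∞)⁻¹) ≤ 1 + (1 + 2) := by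
        gcongr
    _ = 4 := by norm_num

noncomputable def gfun (m n : ℤ) : ℝ≥0∞ :=
  if m = n^2 then 0 else (((m - n^2).natAbs : ℕ) : ℝ≥0∞)⁻¹

lemma gfun_natAbs (m n : ℤ) : gfun m n = gfun m (n.natAbs : ℤ) := by
  have h : ((n.natAbs : ℤ))^2 = n^2 := Int.natAbs_sq n
  simp [gfun, h]

lemma gfun_le (m : ℤ) (hm : 0 ≤ m) (k : ℕ) :
    gfun m (k : ℤ) ≤ cfun (if k ≤ Nat.sqrt m.toNat then Nat.sqrt m.toNat - k else k - Nat.sqrt m.toNat) := by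
  set r := Nat.sqrt m.toNat with hr
  set d := (if k ≤ r then r - k else k - r) with hd
  by_cases hne : m = (k:ℤ)^2
  · simp [gfun, hne]
  · set D := max (d-1) 1 with hD
    have hrle : (r:ℤ)^2 ≤ m := by
      have h1 := Nat.sqrt_le' m.toNat
      have h2 : ((r^2 : ℕ) : ℤ) ≤ (m.toNat : ℤ) := by exact_mod_cast h1
      rw [Int.toNat_of_nonneg hm] at h2
      push_cast at h2
      linarith
    have hrlt : m < ((r:ℤ)+1)^2 := by
      have h1 := Nat.lt_succ_sqrt' m.toNat
      have h2 : ((m.toNat : ℤ)) < (((r+1)^2 : ℕ) : ℤ) := by exact_mod_cast h1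
      rw [Int.toNat_of_nonneg hm] at h2
      push_cast at h2
      linarith
    have habs : (D^2 : ℕ) ≤ (m - (k:ℤ)^2).natAbs := by
      have hbig : ((D:ℤ))^2 ≤ |m - (k:ℤ)^2| := by
        rcases le_or_gt k r with hk | hk
        · -- k ≤ r, m - k² > 0
          have hkr : (k:ℤ) ≤ r := by exact_mod_cast hk
          have hpos : 0 < m - (k:ℤ)^2 := by
            have h1 : ((k:ℤ))^2 ≤ (r:ℤ)^2 := by nlinarith [Int.ofNat_nonneg k]
            have h2 : ((k:ℤ))^2 ≤ m := le_trans h1 hrle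
            omega
          rw [abs_of_pos hpos]
          rcases le_or_gt d 1 with hd1 | hd1
          · have h1 : D = 1 := by omega
            rw [h1]; push_cast; omega
          · have hdd : d = r - k := by simp [hd, hk]
            have hDz : (D:ℤ) = (r:ℤ) - k - 1 := by
              have h1 : D = d - 1 := by omega
              have h2 : d = r - k := hdd
              omega
            rw [hDz]
            nlinarith [Int.ofNat_nonneg k]
        · -- k > r, k² - m > 0
          have hkr : (r:ℤ) < k := by exact_mod_cast hk
          have hpos : 0 < (k:ℤ)^2 - m := by nlinarith
          rw [abs_of_neg (by omega : m - (k:ℤ)^2 < 0)]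
          have h1 : (k:ℤ)^2 - m ≥ ((k:ℤ)-r-1)^2 + 1 := by nlinarith [Int.ofNat_nonneg r]
          rcases le_or_gt d 1 with hd1 | hd1
          · have hD1 : D = 1 := by omega
            rw [hD1]; push_cast; nlinarith [sq_nonneg ((k:ℤ)-r-1)]
          · have hdd : d = k - r := by simp [hd, Nat.not_le.2 hk]
            have hDz : (D:ℤ) = (k:ℤ) - r - 1 := by
              have h1 : D = d - 1 := by omega
              omega
            rw [hDz]; omega
      have := Int.abs_eq_natAbs (m - (k:ℤ)^2)
      have h2 : ((D^2 : ℕ) : ℤ) ≤ ((m - (k:ℤ)^2).natAbs : ℤ) := by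
        push_cast
        omega
      exact_mod_cast h2
    have hc : ((((max (d-1) 1)^2 : ℕ)) : ℝ≥0∞) ≤ (((m - (k:ℤ)^2).natAbs : ℕ) : ℝ≥0∞) :=
      Nat.cast_le.2 habs
    simp only [gfun, hne, if_false, cfun]
    exact ENNReal.inv_le_inv' hc

lemma prod_bool_tsum (F : ℕ → ℝ≥0∞) : (∑' p : ℕ × Bool, F p.1) = 2 * ∑' k : ℕ, F k := by
  rw [ENNReal.tsum_prod']
  have : ∀ a : ℕ, (∑' b : Bool, F a) = 2 * F a := by
    intro a; rw [tsum_bool]; ring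
  simp_rw [this]
  rw [ENNReal.tsum_mul_left]

lemma key_bound (m : ℤ) (hm : 0 ≤ m) : (∑' n : ℤ, gfun m n) ≤ 16 := by
  set r := Nat.sqrt m.toNat with hr
  have step1 : (∑' n : ℤ, gfun m n) ≤ 2 * ∑' k : ℕ, gfun m (k:ℤ) := by
    have hinj : Function.Injective (fun n : ℤ => ((n.natAbs, decide (0 ≤ n)) : ℕ × Bool)) := by
      intro x y hxy
      simp only [Prod.mk.injEq, decide_eq_decide] at hxy
      omega
    calc (∑' n : ℤ, gfun m n) = ∑' n : ℤ, (fun p : ℕ × Bool => gfun m (p.1 : ℤ)) ((n.natAbs, decide (0 ≤ n))) := by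
          exact tsum_congr fun n => gfun_natAbs m n
      _ ≤ ∑' p : ℕ × Bool, gfun m (p.1 : ℤ) := ENNReal.tsum_comp_le_tsum_of_injective hinj _
      _ = 2 * ∑' k : ℕ, gfun m (k:ℤ) := prod_bool_tsum (fun k => gfun m (k:ℤ))
  have step2 : (∑' k : ℕ, gfun m (k:ℤ)) ≤ 2 * ∑' j : ℕ, cfun j := by
    have hinj : Function.Injective (fun k : ℕ => (if k ≤ r then ((r - k, false) : ℕ × Bool) else (k - r, true))) := by
      intro x y hxy
      by_cases hx : x ≤ r <;> by_cases hy : y ≤ r <;>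
        simp [hx, hy, Prod.ext_iff] at hxy <;> omega
    calc (∑' k : ℕ, gfun m (k:ℤ))
        ≤ ∑' k : ℕ, (fun p : ℕ × Bool => cfun p.1) (if k ≤ r then ((r - k, false) : ℕ × Bool) else (k - r, true)) := by
          apply ENNReal.tsum_le_tsum
          intro k
          have := gfun_le m hm k
          by_cases hk : k ≤ r <;> simp only [hk, ← hr, if_true, if_false] at this ⊢ <;> exact this
      _ ≤ ∑' p : ℕ × Bool, cfun p.1 := ENNReal.tsum_comp_le_tsum_of_injective hinj _
      _ = 2 * ∑' j : ℕ, cfun j := prod_bool_tsum cfun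
  calc (∑' n : ℤ, gfun m n) ≤ 2 * ∑' k : ℕ, gfun m (k:ℤ) := step1
    _ ≤ 2 * (2 * ∑' j : ℕ, cfun j) := by gcongr
    _ ≤ 2 * (2 * 4) := by gcongr; exact cfun_sum
    _ = 16 := by norm_num


lemma prodsum (A : ℤ → ℝ≥0∞) : ∀ N : ℕ, (∑' v : Fin N → ℤ, ∏ i, A (v i)) = (∑' k : ℤ, A k)^N := by
  intro N
  induction N with
  | zero =>
    rw [pow_zero]
    have : ∀ v : Fin 0 → ℤ, (∏ i, A (v i)) = 1 := by intro v; simp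
    simp_rw [this]
    rw [tsum_eq_single (fun i => i.elim0) (by intro b hb; exact absurd (funext fun i => i.elim0) hb)]
  | succ n ih =>
    rw [← (Fin.consEquiv (fun _ : Fin (n+1) => ℤ)).tsum_eq (fun v => ∏ i, A (v i))]
    rw [ENNReal.tsum_prod']
    have hterm : ∀ (x : ℤ) (w : Fin n → ℤ),
        (∏ i, A (((Fin.consEquiv (fun _ : Fin (n+1) => ℤ)) (x, w)) i)) = A x * ∏ i, A (w i) := by
      intro x w
      rw [Fin.prod_univ_succ]
      simp [Fin.consEquiv]
    simp_rw [hterm, ENNReal.tsum_mul_left, ENNReal.tsum_mul_right]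
    rw [ih, pow_succ]
    ring

/-- Combinatorial lemma: there is a universal constant `C > 0` such that for every
absolutely summable sequence `a : ℤ → ℂ` with `∑ |a_k| = S` and every `N ≥ 1`,
`∑_{n} ∑_{n₁²+⋯+n_N² ≠ n²} |a_{n₁} ⋯ a_{n_N}| / |n₁²+⋯+n_N² - n²| ≤ C S^N`
(the left-hand side being in particular finite, which is expressed here by working
in `ℝ≥0∞`). -/
theorem stmt12 :
    ∃ C > (0:ℝ), ∀ (a : ℤ → ℂ) (S : ℝ),
      Summable (fun k : ℤ => ‖a k‖) → (∑' k : ℤ, ‖a k‖) = S →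
      ∀ (N : ℕ), 1 ≤ N →
        (∑' n : ℤ, ∑' v : {v : Fin N → ℤ // (∑ i, (v i)^2) ≠ n^2},
            ENNReal.ofReal ((∏ i, ‖a (v.1 i)‖) /
              |(∑ i, ((v.1 i : ℝ))^2) - (n:ℝ)^2|))
          ≤ ENNReal.ofReal (C * S ^ N) := by
  refine ⟨16, by norm_num, ?_⟩
  intro a S hsum hS N hN
  set A : ℤ → ℝ≥0∞ := fun k => ENNReal.ofReal ‖a k‖ with hA
  have hS0 : 0 ≤ S := hS ▸ tsum_nonneg (fun k => norm_nonneg _)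
  have hT : (∑' k : ℤ, A k) = ENNReal.ofReal S := by
    rw [← hS, ENNReal.ofReal_tsum_of_nonneg (fun k => norm_nonneg _) hsum]
  -- term identity
  have hterm : ∀ (n : ℤ) (v : Fin N → ℤ), (∑ i, (v i)^2) ≠ n^2 →
      ENNReal.ofReal ((∏ i, ‖a (v i)‖) / |(∑ i, ((v i : ℝ))^2) - (n:ℝ)^2|)
        = (∏ i, A (v i)) * gfun (∑ i, (v i)^2) n := by
    intro n v hv
    set M : ℤ := ∑ i, (v i)^2 with hM
    have hcast : (∑ i, ((v i : ℝ))^2) = (M:ℝ) := by push_cast [hM]; ring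
    have habs : |(M:ℝ) - (n:ℝ)^2| = (((M - n^2).natAbs : ℕ) : ℝ) := by
      rw [Nat.cast_natAbs]
      push_cast
      ring_nf
    have hpos : (0:ℝ) < (((M - n^2).natAbs : ℕ) : ℝ) := by
      have : (M - n^2).natAbs ≠ 0 := by
        simp only [ne_eq, Int.natAbs_eq_zero]
        omega
      positivity
    rw [hcast, habs, ENNReal.ofReal_div_of_pos hpos,
      ENNReal.ofReal_prod_of_nonneg (fun i _ => norm_nonneg _), ENNReal.ofReal_natCast,
      div_eq_mul_inv]
    congr 1
    simp [gfun, hv]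
  calc (∑' n : ℤ, ∑' v : {v : Fin N → ℤ // (∑ i, (v i)^2) ≠ n^2},
            ENNReal.ofReal ((∏ i, ‖a (v.1 i)‖) / |(∑ i, ((v.1 i : ℝ))^2) - (n:ℝ)^2|))
      = ∑' n : ℤ, ∑' v : {v : Fin N → ℤ // (∑ i, (v i)^2) ≠ n^2},
          (fun w : Fin N → ℤ => (∏ i, A (w i)) * gfun (∑ i, (w i)^2) n) v.1 := by
        refine tsum_congr fun n => tsum_congr fun v => ?_
        exact hterm n v.1 v.2
    _ ≤ ∑' n : ℤ, ∑' v : Fin N → ℤ, (∏ i, A (v i)) * gfun (∑ i, (v i)^2) n := by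
        refine ENNReal.tsum_le_tsum fun n => ?_
        exact ENNReal.tsum_comp_le_tsum_of_injective Subtype.val_injective _
    _ = ∑' v : Fin N → ℤ, ∑' n : ℤ, (∏ i, A (v i)) * gfun (∑ i, (v i)^2) n := ENNReal.tsum_comm
    _ = ∑' v : Fin N → ℤ, (∏ i, A (v i)) * ∑' n : ℤ, gfun (∑ i, (v i)^2) n := by
        refine tsum_congr fun v => ENNReal.tsum_mul_left
    _ ≤ ∑' v : Fin N → ℤ, (∏ i, A (v i)) * 16 := by
        refine ENNReal.tsum_le_tsum fun v => ?_
        gcongr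
        exact key_bound _ (Finset.sum_nonneg fun i _ => sq_nonneg _)
    _ = 16 * ∑' v : Fin N → ℤ, (∏ i, A (v i)) := by
        simp_rw [mul_comm]; exact ENNReal.tsum_mul_left
    _ = 16 * (ENNReal.ofReal S)^N := by rw [prodsum, hT]
    _ = ENNReal.ofReal (16 * S ^ N) := by
        rw [ENNReal.ofReal_mul (by norm_num), ENNReal.ofReal_pow hS0]
        norm_num
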